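/- Kronecker's approximation theorem (matrix form): Let A be a real m × n matrix such that the only rational vector z ∈ ℚ^m with Aᵀ z ∈ ℚ^n is z = 0. Then for every ε > 0 and every b₀, ..., b_{m−1} ∈ ℝ, there exist integers p₀, ..., p_{m−1} ∈ ℤ and an integer vector q ∈ ℤ^n such that |A_i q − p_i − b_i| < ε for all i < m, where A_i denotes the i-th row of A. -/

import Mathlib

open Filter Topology Submodule Module

section KroneckerAux

variable {E : Type*} [NormedAddCommGroup E] [NormedSpace ℝ E] [FiniteDimensional ℝ E]

/-- A closed subgroup of a finite dimensional real normed space containing no line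
is discrete. -/
lemma kron_discrete (K : AddSubgroup E) (hK : IsClosed (K : Set E))
    (hline : ∀ x : E, (∀ t : ℝ, t • x ∈ K) → x = 0) :
    ∃ ε > (0:ℝ), ∀ k ∈ K, ‖k‖ < ε → k = 0 := by
  by_contra hcon
  push_neg at hcon
  have hex : ∀ n : ℕ, ∃ x : E, x ∈ K ∧ ‖x‖ < 1/(n+1) ∧ x ≠ 0 := by
    intro n
    obtain ⟨x, hxK, hxn, hx0⟩ := hcon (1/(n+1)) (by positivity)
    exact ⟨x, hxK, hxn, hx0⟩
  choose k hkK hkn hk0 using hex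
  have hknorm : ∀ n, 0 < ‖k n‖ := fun n => norm_pos_iff.mpr (hk0 n)
  set u : ℕ → E := fun n => ‖k n‖⁻¹ • k n with hu
  have husphere : ∀ n, u n ∈ Metric.sphere (0:E) 1 := by
    intro n
    simp only [Metric.mem_sphere, dist_zero_right, hu, norm_smul, norm_inv, norm_norm]
    rw [inv_mul_cancel₀ (hknorm n).ne']
  have : ProperSpace E := FiniteDimensional.proper ℝ E
  obtain ⟨x, hxs, φ, hφ, hlim⟩ :=
    (isCompact_sphere (0:E) 1).tendsto_subseq husphere
  have hxnorm : ‖x‖ = 1 := by simpa [dist_zero_right] using hxs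
  have hkφ0 : Tendsto (fun n => ‖k (φ n)‖) atTop (𝓝 0) := by
    refine squeeze_zero (fun n => (hknorm _).le) (fun n => ?_)
      tendsto_one_div_add_atTop_nhds_zero_nat
    refine (hkn (φ n)).le.trans ?_
    have hle : (n:ℝ) + 1 ≤ (φ n : ℝ) + 1 := by
      have : (n:ℝ) ≤ (φ n : ℝ) := by exact_mod_cast hφ.le_apply
      linarith
    exact one_div_le_one_div_of_le (by positivity) hle
  have hxK : ∀ t : ℝ, t • x ∈ K := by
    intro t
    set w : ℕ → E := fun n => ⌊t / ‖k (φ n)‖⌋ • k (φ n) with hw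
    have hwK : ∀ n, w n ∈ K := fun n => zsmul_mem (hkK (φ n)) _
    have hwlim : Tendsto w atTop (𝓝 (t • x)) := by
      rw [tendsto_iff_norm_sub_tendsto_zero]
      have hbound : ∀ n, ‖w n - t • x‖ ≤ (|t|+1) * ‖u (φ n) - x‖ + ‖k (φ n)‖ := by
        intro n
        set r := ‖k (φ n)‖ with hr
        have hr0 : 0 < r := hknorm _
        set c : ℤ := ⌊t / r⌋ with hc
        have hkey : w n = ((c:ℝ) * r) • u (φ n) := by
          simp only [hw, hu, smul_smul, ← Int.cast_smul_eq_zsmul ℝ]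
          congr 1
          field_simp
          rw [hc, hr, mul_div_assoc, div_self (hknorm _).ne', mul_one]
        have h1 : |(c:ℝ) * r| ≤ |t| + 1 := by
          have hcle : |(c:ℝ) - t / r| ≤ 1 := by
            rw [abs_le]
            constructor
            · have := Int.lt_floor_add_one (t / r); linarith
            · have := Int.floor_le (t / r); linarith
          have : |(c:ℝ) * r - t| ≤ r := by
            have : (c:ℝ) * r - t = ((c:ℝ) - t / r) * r := by field_simp
            rw [this, abs_mul, abs_of_pos hr0]
            nlinarith [abs_nonneg ((c:ℝ) - t/r)]
          have hr1 : r ≤ 1 := by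
            have := (hkn (φ n)).le
            have h2 : 1/((φ n : ℝ)+1) ≤ 1 := by
              rw [div_le_one (by positivity)]
              have : (0:ℝ) ≤ (φ n : ℝ) := Nat.cast_nonneg _
              linarith
            exact this.trans h2
          calc |(c:ℝ) * r| ≤ |t| + |(c:ℝ)*r - t| := by
                have := abs_sub_abs_le_abs_sub ((c:ℝ)*r) t
                have := abs_add_le t ((c:ℝ)*r - t)
                calc |(c:ℝ)*r| = |t + ((c:ℝ)*r - t)| := by ring_nf
                  _ ≤ |t| + |(c:ℝ)*r - t| := abs_add_le _ _
            _ ≤ |t| + r := by linarith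
            _ ≤ |t| + 1 := by linarith
        have h2 : |(c:ℝ) * r - t| ≤ r := by
          have heq : (c:ℝ) * r - t = ((c:ℝ) - t / r) * r := by field_simp
          have hcle : |(c:ℝ) - t / r| ≤ 1 := by
            rw [abs_le]
            constructor
            · have := Int.lt_floor_add_one (t / r); linarith
            · have := Int.floor_le (t / r); linarith
          rw [heq, abs_mul, abs_of_pos hr0]
          nlinarith [abs_nonneg ((c:ℝ) - t/r)]
        calc ‖w n - t • x‖
            = ‖((c:ℝ)*r) • (u (φ n) - x) + (((c:ℝ)*r - t)) • x‖ := by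
              rw [hkey]; congr 1; rw [smul_sub, sub_smul]; abel
          _ ≤ ‖((c:ℝ)*r) • (u (φ n) - x)‖ + ‖(((c:ℝ)*r - t)) • x‖ := norm_add_le _ _
          _ = |(c:ℝ)*r| * ‖u (φ n) - x‖ + |(c:ℝ)*r - t| * ‖x‖ := by
              rw [norm_smul, norm_smul, Real.norm_eq_abs, Real.norm_eq_abs]
          _ ≤ (|t|+1) * ‖u (φ n) - x‖ + r * 1 := by
              have hb1 : |(c:ℝ)*r| * ‖u (φ n) - x‖ ≤ (|t|+1) * ‖u (φ n) - x‖ :=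
                mul_le_mul_of_nonneg_right h1 (norm_nonneg _)
              have hb2 : |(c:ℝ)*r - t| * ‖x‖ ≤ r * 1 := by
                rw [hxnorm, mul_one, mul_one]; exact h2
              linarith
          _ = (|t|+1) * ‖u (φ n) - x‖ + ‖k (φ n)‖ := by rw [mul_one]
      refine squeeze_zero (fun n => norm_nonneg _) hbound ?_
      have h1 : Tendsto (fun n => ‖u (φ n) - x‖) atTop (𝓝 0) := by
        rw [← tendsto_iff_norm_sub_tendsto_zero]
        exact hlim
      have := (h1.const_mul (|t|+1)).add hkφ0
      simpa using this
    exact hK.mem_of_tendsto hwlim (Eventually.of_forall hwK)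
  have := hline x hxK
  rw [this, norm_zero] at hxnorm
  norm_num at hxnorm

/-- A proper closed subgroup of a finite dimensional real vector space is annihilated
(mod ℤ) by a nonzero linear functional. -/
lemma kron_dual (H : AddSubgroup E) (hH : IsClosed (H : Set E))
    (hne : (H : Set E) ≠ Set.univ) :
    ∃ f : E →ₗ[ℝ] ℝ, f ≠ 0 ∧ ∀ h ∈ H, ∃ k : ℤ, f h = (k : ℝ) := by
  classical
  set V : Submodule ℝ E :=
    { carrier := {x | ∀ t : ℝ, t • x ∈ H}
      add_mem' := fun ha hb t => by rw [smul_add]; exact add_mem (ha t) (hb t)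
      zero_mem' := fun t => by rw [smul_zero]; exact zero_mem H
      smul_mem' := fun s x hx t => by rw [smul_smul]; exact hx (t*s) } with hVdef
  have hVH : (V : Set E) ⊆ H := fun x hx => by simpa using hx 1
  have hVtop : V ≠ ⊤ := by
    intro h
    apply hne
    apply Set.eq_univ_of_univ_subset
    intro x _
    exact hVH (by rw [h]; trivial)
  obtain ⟨W, hW⟩ := Submodule.exists_isCompl V
  set K : AddSubgroup E := H ⊓ W.toAddSubgroup with hKdef
  have hKH : (K : Set E) ⊆ H := fun x hx => hx.1
  have hKW : (K : Set E) ⊆ W := fun x hx => hx.2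
  have hKclosed : IsClosed (K : Set E) :=
    hH.inter W.closed_of_finiteDimensional
  have hKline : ∀ x : E, (∀ t : ℝ, t • x ∈ K) → x = 0 := by
    intro x hx
    have hxV : x ∈ V := fun t => (hx t).1
    have hxW : x ∈ W := by simpa using (hx 1).2
    exact (Submodule.disjoint_def.mp hW.disjoint) x hxV hxW
  obtain ⟨ε, hε, hsep⟩ := kron_discrete K hKclosed hKline
  -- decomposition of H
  have hdecomp : ∀ h ∈ H, ∃ v ∈ V, ∃ w ∈ (K : Set E), h = v + w := by
    intro h hh
    set v : E := (Submodule.projectionOnto V W hW h : E) with hv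
    set w : E := (Submodule.projectionOnto W V hW.symm h : E) with hw
    have hsum : v + w = h := Submodule.projection_add_projection_eq_self hW h
    have hvV : v ∈ V := Subtype.mem _
    have hwW : w ∈ W := Subtype.mem _
    have hvH : v ∈ H := hVH hvV
    have hwH : w ∈ H := by
      have : w = h - v := by rw [← hsum]; abel
      rw [this]; exact sub_mem hh hvH
    exact ⟨v, hvV, w, ⟨hwH, hwW⟩, hsum.symm⟩
  -- the lattice
  set L : Submodule ℤ E := AddSubgroup.toIntSubmodule K with hLdef
  have hLK : (L : Set E) = (K : Set E) := AddSubgroup.coe_toIntSubmodule K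
  have hLdisc : DiscreteTopology L := by
    refine discreteTopology_iff_isOpen_singleton_zero.mpr ?_
    rw [isOpen_induced_iff]
    refine ⟨Metric.ball 0 ε, Metric.isOpen_ball, ?_⟩
    ext x
    simp only [Set.mem_preimage, Metric.mem_ball, dist_zero_right, Set.mem_singleton_iff]
    constructor
    · intro hx
      have : (x : E) ∈ K := by
        have hx2 := x.2
        rw [← SetLike.mem_coe, ← hLK]
        exact hx2
      exact Subtype.ext (hsep _ this hx)
    · intro hx; rw [hx]; simpa using hε
  set U : Submodule ℝ E := span ℝ (L : Set E) with hUdef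
  have hLU : (L : Set E) ⊆ U := Submodule.subset_span
  have hUW : U ≤ W := by
    rw [hUdef, Submodule.span_le, hLK]
    exact hKW
  have hVU : Disjoint V U := hW.disjoint.mono_right hUW
  -- pull the lattice into U
  set f₀ := U.subtype with hf₀
  set L₀ : Submodule ℤ U := L.comap (f₀.restrictScalars ℤ) with hL₀def
  have h_img : f₀ '' L₀ = L := by
    rw [← LinearMap.coe_restrictScalars ℤ f₀, ← Submodule.map_coe (f₀.restrictScalars ℤ),
      Submodule.map_comap_eq_self]
    exact fun x hx ↦ LinearMap.mem_range.mpr ⟨⟨x, Submodule.subset_span hx⟩, rfl⟩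
  have hL₀disc : DiscreteTopology L₀ := by
    refine DiscreteTopology.preimage_of_continuous_injective (L : Set E) ?_ (injective_subtype _)
    exact LinearMap.continuous_of_finiteDimensional f₀
  have hL₀lat : IsZLattice ℝ L₀ := ⟨by
    rw [← (Submodule.map_injective_of_injective (injective_subtype _)).eq_iff, Submodule.map_span,
      Submodule.map_top, range_subtype, h_img]⟩
  have : Module.Finite ℤ L₀ := ZLattice.module_finite ℝ L₀
  have : Module.Free ℤ L₀ := ZLattice.module_free ℝ L₀
  set ι := Module.Free.ChooseBasisIndex ℤ L₀ with hι
  set b : Basis ι ℤ L₀ := Module.Free.chooseBasis ℤ L₀ with hb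
  set bU : Basis ι ℝ U := b.ofZLatticeBasis ℝ L₀ with hbU
  by_cases hsplit : V ⊔ U = ⊤
  · -- the projection onto U composed with a dual-basis coordinate
    have hcompl : IsCompl V U := ⟨hVU, codisjoint_iff.mpr hsplit⟩
    have hιne : Nonempty ι := by
      by_contra hempty
      rw [not_nonempty_iff] at hempty
      have hUsub : Subsingleton U := by
        have : Subsingleton (ι →₀ ℝ) := inferInstance
        exact bU.repr.toEquiv.subsingleton
      have hUbot : U = ⊥ := by
        rw [Submodule.eq_bot_iff]
        intro x hx
        have : (⟨x, hx⟩ : U) = 0 := Subsingleton.elim _ _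
        simpa using congrArg (fun y : U => (y : E)) this
      rw [hUbot, sup_bot_eq] at hsplit
      exact hVtop hsplit
    obtain ⟨i₀⟩ := hιne
    set prU : E →ₗ[ℝ] U := Submodule.projectionOnto U V hcompl.symm with hpr
    set f : E →ₗ[ℝ] ℝ := (bU.coord i₀).comp prU with hf
    refine ⟨f, ?_, ?_⟩
    · intro h0
      have h1 : f (bU i₀ : E) = 1 := by
        rw [hf]
        simp only [LinearMap.comp_apply]
        rw [hpr, Submodule.projectionOnto_apply_left hcompl.symm (bU i₀)]
        simp [Basis.coord_apply]
      rw [h0] at h1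
      simp at h1
    · intro h hh
      obtain ⟨v, hv, w, hwK, rfl⟩ := hdecomp h hh
      have hwL : w ∈ L := by rw [← SetLike.mem_coe, hLK]; exact hwK
      have hwU : w ∈ U := hLU hwL
      have hwL₀ : (⟨w, hwU⟩ : U) ∈ L₀ := by
        rw [hL₀def, Submodule.mem_comap]
        exact hwL
      refine ⟨b.repr ⟨⟨w, hwU⟩, hwL₀⟩ i₀, ?_⟩
      have hfv : f v = 0 := by
        rw [hf]
        simp only [LinearMap.comp_apply]
        rw [hpr, Submodule.projectionOnto_apply_of_mem_right hcompl.symm hv]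
        simp
      have hfw : f w = b.repr ⟨⟨w, hwU⟩, hwL₀⟩ i₀ := by
        rw [hf]
        simp only [LinearMap.comp_apply]
        have : prU w = ⟨w, hwU⟩ := by
          rw [hpr]
          have := Submodule.projectionOnto_apply_left hcompl.symm (⟨w, hwU⟩ : U)
          simpa using this
        rw [this, Basis.coord_apply]
        have := Basis.ofZLatticeBasis_repr_apply ℝ L₀ b ⟨⟨w, hwU⟩, hwL₀⟩ i₀
        rw [← hbU] at this
        simpa using this
      rw [map_add, hfv, hfw, zero_add]
  · -- a functional vanishing on V ⊔ U
    have hlt : V ⊔ U < ⊤ := lt_top_iff_ne_top.mpr hsplit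
    obtain ⟨f, hf0, hmap⟩ :=
      Submodule.exists_dual_map_eq_bot_of_lt_top hlt inferInstance
    refine ⟨f, hf0, ?_⟩
    intro h hh
    obtain ⟨v, hv, w, hwK, rfl⟩ := hdecomp h hh
    have hv' : v ∈ V ⊔ U := Submodule.mem_sup_left hv
    have hw' : w ∈ V ⊔ U := by
      refine Submodule.mem_sup_right (hLU ?_)
      rw [hLK]
      exact hwK
    have hfzero : ∀ x ∈ V ⊔ U, f x = 0 := by
      intro x hx
      have : f x ∈ Submodule.map f (V ⊔ U) := Submodule.mem_map_of_mem hx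
      rw [hmap] at this
      simpa using this
    refine ⟨0, ?_⟩
    rw [map_add, hfzero v hv', hfzero w hw']
    simp

end KroneckerAux

/-- Kronecker's approximation theorem in matrix form. -/
theorem stmt6 (m n : ℕ) (A : Matrix (Fin m) (Fin n) ℝ)
    (hA : ∀ z : Fin m → ℚ,
      (∀ j : Fin n, ∃ q : ℚ, A.transpose.mulVec (fun i => (z i : ℝ)) j = (q : ℝ)) → z = 0) :
    ∀ ε : ℝ, 0 < ε → ∀ b : Fin m → ℝ,
      ∃ (p : Fin m → ℤ) (q : Fin n → ℤ),
        ∀ i : Fin m, |A.mulVec (fun j => (q j : ℝ)) i - p i - b i| < ε := by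
  classical
  set v : Fin n ⊕ Fin m → (Fin m → ℝ) :=
    Sum.elim (fun j => fun i => A i j) (fun i => Pi.single i 1) with hv
  set G : Submodule ℤ (Fin m → ℝ) := span ℤ (Set.range v) with hG
  set H : AddSubgroup (Fin m → ℝ) := G.toAddSubgroup.topologicalClosure with hH
  have hHclosed : IsClosed (H : Set (Fin m → ℝ)) := AddSubgroup.isClosed_topologicalClosure _
  have hGH : (G : Set (Fin m → ℝ)) ⊆ H := G.toAddSubgroup.le_topologicalClosure
  have hvH : ∀ k, v k ∈ H := fun k => hGH (Submodule.subset_span ⟨k, rfl⟩)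
  by_cases huniv : (H : Set (Fin m → ℝ)) = Set.univ
  · -- dense case
    intro ε hε b
    have hb : b ∈ closure (G : Set (Fin m → ℝ)) := by
      have : b ∈ (H : Set (Fin m → ℝ)) := by rw [huniv]; trivial
      exact this
    obtain ⟨g, hgG, hdist⟩ := Metric.mem_closure_iff.mp hb ε hε
    obtain ⟨c, hc⟩ := (mem_span_range_iff_exists_fun ℤ).mp hgG
    refine ⟨fun i => -(c (Sum.inr i)), fun j => c (Sum.inl j), fun i => ?_⟩
    have hgi : g i = (∑ j, (c (Sum.inl j) : ℝ) * A i j) + (c (Sum.inr i) : ℝ) := by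
      have := congrFun hc i
      rw [Finset.sum_apply] at this
      rw [← this, Fintype.sum_sum_type]
      congr 1
      · refine Finset.sum_congr rfl fun j _ => ?_
        simp [hv, zsmul_eq_mul]
      · rw [Finset.sum_eq_single i]
        · simp [hv]
        · intro i' _ hne
          simp [hv, Pi.single_apply, hne.symm]
        · simp
    have hmv : A.mulVec (fun j => (c (Sum.inl j) : ℝ)) i
        = ∑ j, (c (Sum.inl j) : ℝ) * A i j := by
      rw [Matrix.mulVec, dotProduct]
      exact Finset.sum_congr rfl fun j _ => mul_comm _ _
    have key : A.mulVec (fun j => (c (Sum.inl j) : ℝ)) i - (-(c (Sum.inr i)) : ℤ) - b i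
        = g i - b i := by
      push_cast
      rw [hmv, hgi]
      ring
    rw [key, ← Real.dist_eq]
    calc dist (g i) (b i) ≤ dist g b := dist_le_pi_dist g b i
      _ = dist b g := dist_comm _ _
      _ < ε := hdist
  · -- otherwise we find a nonzero rational relation, contradiction
    exfalso
    obtain ⟨f, hf0, hint⟩ := kron_dual H hHclosed huniv
    have he : ∀ i, ∃ k : ℤ, f (Pi.single i 1) = (k : ℝ) := fun i =>
      hint _ (hvH (Sum.inr i))
    choose z hz using he
    have hcol : ∀ j, (fun i => A i j) = ∑ i, (A i j) • (Pi.single i 1 : Fin m → ℝ) := by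
      intro j
      funext i'
      rw [Finset.sum_apply, Finset.sum_eq_single i']
      · simp
      · intro i _ hne
        simp [Pi.single_apply, hne.symm]
      · simp
    have hfcol : ∀ j, f (fun i => A i j) = ∑ i, A i j * (z i : ℝ) := by
      intro j
      rw [hcol j, map_sum]
      refine Finset.sum_congr rfl fun i _ => ?_
      rw [map_smul, hz i, smul_eq_mul]
    have hzzero : (fun i => (z i : ℚ)) = 0 := by
      apply hA
      intro j
      obtain ⟨k, hk⟩ := hint _ (hvH (Sum.inl j))
      refine ⟨(k : ℚ), ?_⟩
      have hmv : A.transpose.mulVec (fun i => ((z i : ℚ) : ℝ)) j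
          = ∑ i, A i j * (z i : ℝ) := by
        rw [Matrix.mulVec, dotProduct]
        refine Finset.sum_congr rfl fun i _ => ?_
        rw [Matrix.transpose_apply]
        push_cast
        ring
      rw [hmv, ← hfcol j]
      have : f (fun i => A i j) = (k : ℝ) := by
        have := hk
        simpa [hv] using this
      rw [this]
      push_cast
      ring
    have hz0 : ∀ i, (z i : ℝ) = 0 := by
      intro i
      have := congrFun hzzero i
      simp only [Pi.zero_apply] at this
      exact_mod_cast congrArg (fun q : ℚ => (q : ℝ)) this
    apply hf0
    apply LinearMap.ext
    intro x
    have hx : x = ∑ i, x i • (Pi.single i 1 : Fin m → ℝ) := by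
      funext i'
      rw [Finset.sum_apply, Finset.sum_eq_single i']
      · simp
      · intro i _ hne
        simp [Pi.single_apply, hne.symm]
      · simp
    rw [LinearMap.zero_apply, hx, map_sum]
    refine Finset.sum_eq_zero fun i _ => ?_
    rw [map_smul, hz i, hz0 i, smul_eq_mul, mul_zero]
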